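/- arXiv:2504.11700 — 2 statements merged into one kernel-verified Lean document; each statement's English description precedes it below -/
import Mathlib

section
/- For every integer m ≥ 4, the sum over l from 2 to m-2 of m(m-1)/(l(l-1)(m-l)(m-l-1)) is at most 16. -/
open Finset

lemma tel_sum (n : ℕ) (hn : 2 ≤ n) :
    ∑ l ∈ Finset.Icc 2 n, (1:ℝ)/((l:ℝ)*((l:ℝ)-1)) = 1 - 1/n := by
  induction n, hn using Nat.le_induction with
  | base => norm_num
  | succ n hn ih =>
    rw [Finset.sum_Icc_succ_top (by omega), ih]
    have hn0 : (n:ℝ) ≠ 0 := by positivity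
    have hn1 : (n:ℝ) + 1 ≠ 0 := by positivity
    push_cast
    field_simp
    ring_nf
    rw [mul_inv_cancel₀ hn0]; ring

theorem sum_frac_le_sixteen (m : ℕ) (hm : 4 ≤ m) :
    ∑ l ∈ Finset.Icc 2 (m - 2),
      ((m : ℝ) * (m - 1)) / ((l : ℝ) * (l - 1) * ((m : ℝ) - l) * ((m : ℝ) - l - 1))
      ≤ 16 := by
  have hm4 : (4:ℝ) ≤ m := by exact_mod_cast hm
  have key : ∀ l ∈ Finset.Icc 2 (m-2),
      ((m : ℝ) * (m - 1)) / ((l : ℝ) * (l - 1) * ((m : ℝ) - l) * ((m : ℝ) - l - 1))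
      ≤ 3/((l:ℝ)*((l:ℝ)-1)) + 3/(((m:ℝ)-l)*((m:ℝ)-l-1)) := by
    intro l hl
    simp only [Finset.mem_Icc] at hl
    have h2l : (2:ℝ) ≤ l := by exact_mod_cast hl.1
    have hlm : (l:ℝ) ≤ (m:ℝ) - 2 := by
      have : (l:ℝ) ≤ ((m-2:ℕ):ℝ) := by exact_mod_cast hl.2
      rwa [Nat.cast_sub (by omega)] at this
    have ha : (0:ℝ) < (l:ℝ)*((l:ℝ)-1) := by nlinarith
    have hb : (0:ℝ) < ((m:ℝ)-l)*((m:ℝ)-l-1) := by nlinarith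
    have hD : (0:ℝ) < (l:ℝ)*((l:ℝ)-1)*((m:ℝ)-l)*((m:ℝ)-l-1) := by
      nlinarith [mul_pos ha hb]
    have hab : (m:ℝ)*((m:ℝ)-1) ≤ 3*(((l:ℝ)*((l:ℝ)-1)) + (((m:ℝ)-l)*((m:ℝ)-l-1))) := by
      nlinarith [sq_nonneg (2*(l:ℝ) - m)]
    rw [div_add_div _ _ (ne_of_gt ha) (ne_of_gt hb), div_le_div_iff₀ hD (mul_pos ha hb)]
    have h3 : 0 ≤ (3*(((l:ℝ)*((l:ℝ)-1)) + (((m:ℝ)-l)*((m:ℝ)-l-1))) - (m:ℝ)*((m:ℝ)-1)) *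
        ((l:ℝ)*((l:ℝ)-1)*((m:ℝ)-l)*((m:ℝ)-l-1)) :=
      mul_nonneg (by linarith) hD.le
    nlinarith [h3]
  have hrefl : ∑ l ∈ Finset.Icc 2 (m-2), (3:ℝ)/(((m:ℝ)-l)*((m:ℝ)-l-1))
      = ∑ l ∈ Finset.Icc 2 (m-2), (3:ℝ)/((l:ℝ)*((l:ℝ)-1)) := by
    apply Finset.sum_nbij' (fun i => m - i) (fun j => m - j)
    · intro a ha; simp only [Finset.mem_Icc] at *; omega
    · intro a ha; simp only [Finset.mem_Icc] at *; omega
    · intro a ha; simp only [Finset.mem_Icc] at ha; omega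
    · intro a ha; simp only [Finset.mem_Icc] at ha; omega
    · intro a ha
      simp only [Finset.mem_Icc] at ha
      rw [Nat.cast_sub (by omega)]
  have htel : ∑ l ∈ Finset.Icc 2 (m-2), (3:ℝ)/((l:ℝ)*((l:ℝ)-1)) ≤ 3 := by
    have h := tel_sum (m-2) (by omega)
    have : ∑ l ∈ Finset.Icc 2 (m-2), (3:ℝ)/((l:ℝ)*((l:ℝ)-1))
        = 3 * ∑ l ∈ Finset.Icc 2 (m-2), (1:ℝ)/((l:ℝ)*((l:ℝ)-1)) := by
      rw [Finset.mul_sum]; congr 1; ext l; ring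
    rw [this, h]
    have : (0:ℝ) ≤ 1/((m-2 : ℕ):ℝ) := by positivity
    linarith
  calc ∑ l ∈ Finset.Icc 2 (m - 2),
      ((m : ℝ) * (m - 1)) / ((l : ℝ) * (l - 1) * ((m : ℝ) - l) * ((m : ℝ) - l - 1))
      ≤ ∑ l ∈ Finset.Icc 2 (m-2),
        ((3:ℝ)/((l:ℝ)*((l:ℝ)-1)) + 3/(((m:ℝ)-l)*((m:ℝ)-l-1))) := Finset.sum_le_sum key
    _ = (∑ l ∈ Finset.Icc 2 (m-2), (3:ℝ)/((l:ℝ)*((l:ℝ)-1)))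
        + ∑ l ∈ Finset.Icc 2 (m-2), (3:ℝ)/(((m:ℝ)-l)*((m:ℝ)-l-1)) := Finset.sum_add_distrib
    _ ≤ 16 := by rw [hrefl]; linarith
end

section
/- Let σ ≥ 1 be a real number and m ≥ 4 an integer. Then the sum over l from 2 to m-2 of m!·((l-2)!·(m-l-2)!)^σ / (l!·(m-l)!) is at most 16·((m-2)!)^σ. -/
lemma tele_aux (n : ℕ) : ∑ l ∈ Finset.Icc 2 n, (3:ℝ)/((l:ℝ)*((l:ℝ)-1)) ≤ 3 - 3/n := by
  induction n with
  | zero => simp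
  | succ n ih =>
    rcases Nat.lt_or_ge n 1 with h | h
    · interval_cases n
      norm_num
    · rw [Finset.sum_Icc_succ_top (by omega)]
      have hn0 : (0:ℝ) < n := by exact_mod_cast h
      have key : (3:ℝ)/((↑(n+1):ℝ)*((↑(n+1):ℝ)-1)) = 3/n - 3/(n+1) := by
        push_cast
        field_simp
        ring_nf
        exact mul_inv_cancel₀ hn0.ne'
      rw [key]
      push_cast
      linarith


lemma pointwise (σ : ℝ) (hσ : 1 ≤ σ) (a b : ℕ) :
    ((a+b+4).factorial : ℝ) * (((a.factorial * b.factorial : ℕ)) : ℝ) ^ σ /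
      (((a+2).factorial * (b+2).factorial : ℕ) : ℝ)
    ≤ ((a+b+2).factorial : ℝ) ^ σ *
      (3/(((a:ℝ)+2)*((a:ℝ)+1)) + 3/(((b:ℝ)+2)*((b:ℝ)+1))) := by
  set A := (a.factorial : ℝ) with hA
  set B := (b.factorial : ℝ) with hB
  set C := ((a+b+2).factorial : ℝ) with hC
  have hApos : 0 < A := by positivity
  have hBpos : 0 < B := by positivity
  have hCpos : 0 < C := by positivity
  have hABC : A * B ≤ C := by
    rw [hA, hB, hC, ← Nat.cast_mul]
    exact_mod_cast le_trans (Nat.le_of_dvd (Nat.factorial_pos _)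
      (Nat.factorial_mul_factorial_dvd_factorial_add a b))
      (Nat.factorial_le (by omega))
  have hE : (0:ℝ) < C ^ (σ - 1) := Real.rpow_pos_of_pos hCpos _
  have h1 : ((a.factorial * b.factorial : ℕ) : ℝ) ^ σ ≤ A * B * C ^ (σ - 1) := by
    push_cast
    have h2 : (A * B) ^ σ = (A*B) ^ (1:ℝ) * (A*B) ^ (σ-1) := by
      rw [← Real.rpow_add (by positivity)]; ring_nf
    rw [h2, Real.rpow_one]
    exact mul_le_mul_of_nonneg_left
      (Real.rpow_le_rpow (by positivity) hABC (by linarith)) (by positivity)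
  have hCσ : C ^ σ = C * C ^ (σ - 1) := by
    nth_rewrite 2 [show C = C ^ (1:ℝ) by rw [Real.rpow_one]]
    rw [← Real.rpow_add hCpos]; ring_nf
  have hfa : (((a+2).factorial : ℕ) : ℝ) = ((a:ℝ)+2)*((a:ℝ)+1)*A := by
    rw [hA, show a+2 = (a+1)+1 from rfl, Nat.factorial_succ, Nat.factorial_succ]
    push_cast; ring
  have hfb : (((b+2).factorial : ℕ) : ℝ) = ((b:ℝ)+2)*((b:ℝ)+1)*B := by
    rw [hB, show b+2 = (b+1)+1 from rfl, Nat.factorial_succ, Nat.factorial_succ]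
    push_cast; ring
  have hfm : (((a+b+4).factorial : ℕ) : ℝ) = ((a:ℝ)+b+4)*((a:ℝ)+b+3)*C := by
    rw [hC, show a+b+4 = (a+b+3)+1 from rfl, show a+b+3 = (a+b+2)+1 from rfl,
      Nat.factorial_succ, Nat.factorial_succ]
    push_cast; ring
  have key : ((a:ℝ)+b+4)*((a:ℝ)+b+3)
      ≤ 3*(((b:ℝ)+2)*((b:ℝ)+1)) + 3*(((a:ℝ)+2)*((a:ℝ)+1)) := by
    nlinarith [sq_nonneg ((a:ℝ)-b), Nat.cast_nonneg (α := ℝ) a, Nat.cast_nonneg (α := ℝ) b]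
  have hPpos : (0:ℝ) < ((a:ℝ)+2)*((a:ℝ)+1) := by positivity
  have hQpos : (0:ℝ) < ((b:ℝ)+2)*((b:ℝ)+1) := by positivity
  calc ((a+b+4).factorial : ℝ) * (((a.factorial * b.factorial : ℕ)) : ℝ) ^ σ /
      (((a+2).factorial * (b+2).factorial : ℕ) : ℝ)
      ≤ ((a+b+4).factorial : ℝ) * (A * B * C ^ (σ-1)) /
      (((a+2).factorial * (b+2).factorial : ℕ) : ℝ) := by
        apply div_le_div_of_nonneg_right ?_ ?_ |>.trans_eq rfl
        · exact mul_le_mul_of_nonneg_left h1 (by positivity)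
        · positivity
    _ = (C * C ^ (σ-1)) * (((a:ℝ)+b+4)*((a:ℝ)+b+3) / ((((a:ℝ)+2)*((a:ℝ)+1)) * (((b:ℝ)+2)*((b:ℝ)+1)))) := by
        push_cast
        rw [hfm, hfa, hfb]
        field_simp
    _ ≤ (C * C ^ (σ-1)) * (3/(((a:ℝ)+2)*((a:ℝ)+1)) + 3/(((b:ℝ)+2)*((b:ℝ)+1))) := by
        apply mul_le_mul_of_nonneg_left ?_ (by positivity)
        rw [div_add_div _ _ (ne_of_gt hPpos) (ne_of_gt hQpos),
          div_le_div_iff₀ (by positivity) (by positivity)]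
        have key2 := mul_le_mul_of_nonneg_right key
          (mul_pos hPpos hQpos).le
        nlinarith [key2]
    _ = ((a+b+2).factorial : ℝ) ^ σ *
      (3/(((a:ℝ)+2)*((a:ℝ)+1)) + 3/(((b:ℝ)+2)*((b:ℝ)+1))) := by rw [hCσ]


theorem sum_factorial_rpow_le (σ : ℝ) (hσ : 1 ≤ σ) (m : ℕ) (hm : 4 ≤ m) :
    ∑ l ∈ Finset.Icc 2 (m - 2),
      (m.factorial : ℝ) *
          (((l - 2).factorial * (m - l - 2).factorial : ℕ) : ℝ) ^ σ /
          ((l.factorial * (m - l).factorial : ℕ) : ℝ)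
      ≤ 16 * ((m - 2).factorial : ℝ) ^ σ := by
  have hCpos : (0:ℝ) < ((m-2).factorial : ℝ) ^ σ := Real.rpow_pos_of_pos (by positivity) _
  have htele : ∑ l ∈ Finset.Icc 2 (m-2), (3:ℝ)/((l:ℝ)*((l:ℝ)-1)) ≤ 3 := by
    refine (tele_aux (m-2)).trans ?_
    have : (0:ℝ) < ((m-2:ℕ):ℝ) := by
      have : 2 ≤ m - 2 := by omega
      exact_mod_cast Nat.lt_of_lt_of_le (by norm_num) this
    have h3 : (0:ℝ) ≤ 3/((m-2:ℕ):ℝ) := by positivity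
    linarith
  have hrefl : ∑ l ∈ Finset.Icc 2 (m-2), (3:ℝ)/(((m-l:ℕ):ℝ)*(((m-l:ℕ):ℝ)-1))
      = ∑ l ∈ Finset.Icc 2 (m-2), (3:ℝ)/((l:ℝ)*((l:ℝ)-1)) := by
    refine Finset.sum_nbij' (fun l => m - l) (fun l => m - l) ?_ ?_ ?_ ?_ ?_
    · intro l hl; simp only [Finset.mem_Icc] at *; omega
    · intro l hl; simp only [Finset.mem_Icc] at *; omega
    · intro l hl; simp only [Finset.mem_Icc] at hl; omega
    · intro l hl; simp only [Finset.mem_Icc] at hl; omega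
    · intro l hl; rfl
  calc ∑ l ∈ Finset.Icc 2 (m - 2),
      (m.factorial : ℝ) *
          (((l - 2).factorial * (m - l - 2).factorial : ℕ) : ℝ) ^ σ /
          ((l.factorial * (m - l).factorial : ℕ) : ℝ)
      ≤ ∑ l ∈ Finset.Icc 2 (m - 2), ((m-2).factorial : ℝ) ^ σ *
          ((3:ℝ)/((l:ℝ)*((l:ℝ)-1)) + (3:ℝ)/(((m-l:ℕ):ℝ)*(((m-l:ℕ):ℝ)-1))) := by
        refine Finset.sum_le_sum ?_
        intro l hl
        rw [Finset.mem_Icc] at hl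
        obtain ⟨a, rfl⟩ : ∃ a, l = a + 2 := ⟨l - 2, by omega⟩
        obtain ⟨b, rfl⟩ : ∃ b, m = a + b + 4 := ⟨m - a - 4, by omega⟩
        have e1 : a + 2 - 2 = a := by omega
        have e2 : a + b + 4 - (a+2) - 2 = b := by omega
        have e3 : a + b + 4 - (a+2) = b + 2 := by omega
        have e4 : a + b + 4 - 2 = a + b + 2 := by omega
        rw [e1, e2, e3, e4]
        refine le_trans (le_of_eq rfl) ((pointwise σ hσ a b).trans (le_of_eq ?_))
        push_cast
        ring
    _ = ((m-2).factorial : ℝ) ^ σ *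
        ((∑ l ∈ Finset.Icc 2 (m-2), (3:ℝ)/((l:ℝ)*((l:ℝ)-1))) +
         (∑ l ∈ Finset.Icc 2 (m-2), (3:ℝ)/(((m-l:ℕ):ℝ)*(((m-l:ℕ):ℝ)-1)))) := by
        rw [← Finset.sum_add_distrib, ← Finset.mul_sum]
    _ ≤ ((m-2).factorial : ℝ) ^ σ * (3 + 3) := by
        apply mul_le_mul_of_nonneg_left _ hCpos.le
        rw [hrefl]
        linarith
    _ ≤ 16 * ((m - 2).factorial : ℝ) ^ σ := by nlinarith
end
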